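/- For the 2ODE y'' = -(x²yz - x²z² - xy³ - xy²z - xz² + y³ + y²z + 2yz² - z²)/(y(x² - y)) (writing z = y'), the function I(x,y,z) = e^x·(xz - y²)/(xy - z) is a first integral: D(I) = 0 wherever y ≠ 0, x² ≠ y, and xy ≠ z. -/

import Mathlib

noncomputable def pdx (F : ℝ × ℝ × ℝ → ℝ) (p : ℝ × ℝ × ℝ) : ℝ :=
  deriv (fun t => F (t, p.2.1, p.2.2)) p.1

noncomputable def pdy (F : ℝ × ℝ × ℝ → ℝ) (p : ℝ × ℝ × ℝ) : ℝ :=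
  deriv (fun t => F (p.1, t, p.2.2)) p.2.1

noncomputable def pdz (F : ℝ × ℝ × ℝ → ℝ) (p : ℝ × ℝ × ℝ) : ℝ :=
  deriv (fun t => F (p.1, p.2.1, t)) p.2.2

/-- The Cartan vector field `D = ∂ₓ + z ∂_y + φ ∂_z` of `y'' = φ(x,y,y')`. -/
noncomputable def Dtot (φ F : ℝ × ℝ × ℝ → ℝ) (p : ℝ × ℝ × ℝ) : ℝ :=
  pdx F p + p.2.2 * pdy F p + φ p * pdz F p

/-- Evaluation of a polynomial in three variables at a point of ℝ³. -/
noncomputable def mev (P : MvPolynomial (Fin 3) ℝ) (p : ℝ × ℝ × ℝ) : ℝ :=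
  MvPolynomial.eval ![p.1, p.2.1, p.2.2] P

noncomputable def phi14 (p : ℝ × ℝ × ℝ) : ℝ :=
  -(p.1 ^ 2 * p.2.1 * p.2.2 - p.1 ^ 2 * p.2.2 ^ 2 - p.1 * p.2.1 ^ 3
      - p.1 * p.2.1 ^ 2 * p.2.2 - p.1 * p.2.2 ^ 2 + p.2.1 ^ 3
      + p.2.1 ^ 2 * p.2.2 + 2 * p.2.1 * p.2.2 ^ 2 - p.2.2 ^ 2)
    / (p.2.1 * (p.1 ^ 2 - p.2.1))

noncomputable def I14 (p : ℝ × ℝ × ℝ) : ℝ :=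
  Real.exp p.1 * (p.1 * p.2.2 - p.2.1 ^ 2) / (p.1 * p.2.1 - p.2.2)

/-- I = eˣ·(xz - y²)/(xy - z) is a first integral of the 2ODE (\ref{2odeexqequalN}). -/
theorem I14_first_integral :
    ∀ p : ℝ × ℝ × ℝ, p.2.1 ≠ 0 → p.1 ^ 2 - p.2.1 ≠ 0 → p.1 * p.2.1 - p.2.2 ≠ 0 →
      Dtot phi14 I14 p = 0 := by
  rintro ⟨x, y, z⟩ hy hxy hd
  simp only [Prod.fst, Prod.snd] at *
  have hx : HasDerivAt (fun t => Real.exp t * (t * z - y ^ 2) / (t * y - z))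
      (((Real.exp x * (x * z - y ^ 2) + Real.exp x * z) * (x * y - z)
        - Real.exp x * (x * z - y ^ 2) * y) / (x * y - z) ^ 2) x := by
    have hn : HasDerivAt (fun t => Real.exp t * (t * z - y ^ 2))
        (Real.exp x * (x * z - y ^ 2) + Real.exp x * z) x := by
      have h1 : HasDerivAt (fun t : ℝ => t * z - y ^ 2) z x := by
        simpa using ((hasDerivAt_id x).mul_const z).sub_const (y ^ 2)
      exact (Real.hasDerivAt_exp x).mul h1
    have hdd : HasDerivAt (fun t : ℝ => t * y - z) y x := by
      simpa using ((hasDerivAt_id x).mul_const y).sub_const z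
    exact hn.div hdd hd
  have hy' : HasDerivAt (fun t => Real.exp x * (x * z - t ^ 2) / (x * t - z))
      ((Real.exp x * (-(2 * y)) * (x * y - z)
        - Real.exp x * (x * z - y ^ 2) * x) / (x * y - z) ^ 2) y := by
    have hn : HasDerivAt (fun t : ℝ => Real.exp x * (x * z - t ^ 2))
        (Real.exp x * (-(2 * y))) y := by
      have h1 : HasDerivAt (fun t : ℝ => x * z - t ^ 2) (-(2 * y)) y := by
        simpa using (hasDerivAt_pow 2 y).const_sub (x * z)
      simpa using h1.const_mul (Real.exp x)
    have hdd : HasDerivAt (fun t : ℝ => x * t - z) x y := by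
      simpa using ((hasDerivAt_id y).const_mul x).sub_const z
    exact hn.div hdd hd
  have hz : HasDerivAt (fun t => Real.exp x * (x * t - y ^ 2) / (x * y - t))
      ((Real.exp x * x * (x * y - z)
        - Real.exp x * (x * z - y ^ 2) * (-1)) / (x * y - z) ^ 2) z := by
    have hn : HasDerivAt (fun t : ℝ => Real.exp x * (x * t - y ^ 2))
        (Real.exp x * x) z := by
      have h1 : HasDerivAt (fun t : ℝ => x * t - y ^ 2) x z := by
        simpa using ((hasDerivAt_id z).const_mul x).sub_const (y ^ 2)
      simpa using h1.const_mul (Real.exp x)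
    have hdd : HasDerivAt (fun t : ℝ => x * y - t) (-1) z := by
      simpa using (hasDerivAt_id z).const_sub (x * y)
    exact hn.div hdd hd
  simp only [Dtot, pdx, pdy, pdz, I14, phi14]
  rw [hx.deriv, hy'.deriv, hz.deriv]
  have he : Real.exp x ≠ 0 := Real.exp_ne_zero x
  field_simp
  ring
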